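/- (Dissipation of energy in contact mechanics.) In the linear contact model, let h : E × ℝ → ℝ be differentiable, let X be a contact Hamiltonian vector field of h, and let c : ℝ → E × ℝ be an integral curve of X, i.e. the derivative of c at each t ∈ ℝ is X(c(t)). Then the energy dissipates at rate −R(h): for every t ∈ ℝ, the function t ↦ h(c(t)) has derivative −Dh_{c(t)}(0,1) · h(c(t)) at t (the identity L_{X_h} h = −(R(h))·h along the dynamics). -/

import Mathlib

/-- **Dissipation of energy in contact mechanics.** In the linear contact
model on `M = E × ℝ` with contact form `η_{(x,s)}(v,σ) = σ − λ(x)(v)` and Reeb vector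
field `R = (0,1)`, let `X` be a contact Hamiltonian vector field of a differentiable
`h : E × ℝ → ℝ` and `c` an integral curve of `X`. Then the energy dissipates at rate
`−R(h)`: for every `t`, the function `t ↦ h(c(t))` has derivative
`−Dh_{c(t)}(0,1) · h(c(t))` at `t`. -/
theorem contact_energy_dissipation
    (E : Type*) [NormedAddCommGroup E] [NormedSpace ℝ E] [FiniteDimensional ℝ E]
    (lam : E →ₗ[ℝ] E →ₗ[ℝ] ℝ)
    (hnd : ∀ u : E, (∀ v : E, lam v u - lam u v = 0) → u = 0)
    (h : E × ℝ → ℝ) (hh : Differentiable ℝ h)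
    (X : E × ℝ → E × ℝ)
    (hX1 : ∀ p : E × ℝ, (X p).2 - lam p.1 (X p).1 = - h p)
    (hX2 : ∀ (p : E × ℝ) (v : E),
      lam v (X p).1 - lam (X p).1 v =
        fderiv ℝ h p (v, 0) + fderiv ℝ h p ((0, 1) : E × ℝ) * lam p.1 v)
    (c : ℝ → E × ℝ) (hc : ∀ t : ℝ, HasDerivAt c (X (c t)) t) :
    ∀ t : ℝ,
      HasDerivAt (fun s => h (c s))
        (-(fderiv ℝ h (c t) ((0, 1) : E × ℝ)) * h (c t)) t := by
  intro t
  set p := c t with hp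
  have hfd := (hh p).hasFDerivAt
  have hcomp := hfd.comp_hasDerivAt t (hc t)
  have hdecomp : (X p) = ((X p).1, (0:ℝ)) + (X p).2 • ((0,1) : E × ℝ) := by
    simp [Prod.ext_iff]
  have hkey : fderiv ℝ h p (X p) = -(fderiv ℝ h p ((0,1) : E × ℝ)) * h p := by
    have h2 := hX2 p (X p).1
    have h1 := hX1 p
    have : fderiv ℝ h p (X p)
        = fderiv ℝ h p ((X p).1, (0:ℝ)) + (X p).2 * fderiv ℝ h p ((0,1) : E × ℝ) := by
      conv_lhs => rw [hdecomp]
      rw [map_add, map_smul]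
      ring_nf
    rw [this]
    have hE : fderiv ℝ h p ((X p).1, (0:ℝ))
        = -(fderiv ℝ h p ((0,1) : E × ℝ) * lam p.1 (X p).1) := by
      have : (0:ℝ) = fderiv ℝ h p ((X p).1, 0) + fderiv ℝ h p ((0,1) : E × ℝ) * lam p.1 (X p).1 := by
        rw [← h2]; ring
      linarith [this]
    rw [hE]
    have : (X p).2 = lam p.1 (X p).1 - h p := by linarith [h1]
    rw [this]; ring
  rw [← hkey]
  exact hcomp
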